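/- Let X be a measurable space, μ a probability measure on X, and g : X → ℝ a bounded measurable function. For natural numbers 1 ≤ k ≤ n, the integral over (x₁,...,xₙ) ∈ Xⁿ, with respect to the n-fold product measure μⁿ, of (1/C(n,k)) · ∑_{I ⊆ {1,...,n}, |I| = k} max_{i∈I} g(xᵢ), equals the integral over (y₁,...,y_k) ∈ X^k, with respect to μ^k, of max_{1≤i≤k} g(yᵢ). In other words, the average over all k-subsets of the maximum reward is an unbiased estimator of maxg@k. -/

import Mathlib

open MeasureTheory

/-- The maximum of `g` over a finite index set `I` (equal to `max_{i ∈ I} g i`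
whenever `I` is nonempty). -/
noncomputable def finsetMax {α : Type*} (I : Finset α) (g : α → ℝ) : ℝ :=
  WithBot.unbotD 0 (I.sup fun a => ((g a : ℝ) : WithBot ℝ))

lemma finsetMax_eq_sup' {α : Type*} (I : Finset α) (h : I.Nonempty) (g : α → ℝ) :
    finsetMax I g = I.sup' h g := by
  rw [finsetMax, show (I.sup fun a => ((g a : ℝ) : WithBot ℝ)) = ((I.sup' h g : ℝ) : WithBot ℝ)
    by rw [Finset.coe_sup']; rfl, WithBot.unbotD_coe]

/-- Pushing the `n`-fold product measure forward along precomposition with an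
injection `Fin k → Fin n` gives the `k`-fold product measure. -/
lemma measurePreserving_comp_inj {X : Type*} [MeasurableSpace X]
    (μ : Measure X) [IsProbabilityMeasure μ] {n k : ℕ}
    (hkn : k ≤ n) (e : Fin k → Fin n) (he : Function.Injective e) :
    MeasurePreserving (fun x : Fin n → X => fun i : Fin k => x (e i))
      (Measure.pi fun _ : Fin n => μ) (Measure.pi fun _ : Fin k => μ) := by
  classical
  set S : Finset (Fin n) := Finset.image e Finset.univ with hS
  have hcardS : S.card = k := by
    rw [hS, Finset.card_image_of_injective _ he, Finset.card_univ, Fintype.card_fin]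
  have hcardSc : Sᶜ.card = n - k := by
    rw [Finset.card_compl, hcardS, Fintype.card_fin]
  set m := n - k with hm
  let f : Fin k ⊕ Fin m → Fin n := Sum.elim e (fun j => Sᶜ.orderEmbOfFin hcardSc j)
  have hf : Function.Bijective f := by
    rw [Fintype.bijective_iff_injective_and_card]
    constructor
    · rintro (a | a) (b | b) hab <;>
        simp only [f, Sum.elim_inl, Sum.elim_inr] at hab
      · exact congrArg Sum.inl (he hab)
      · exfalso
        have h1 : e a ∈ S := Finset.mem_image_of_mem e (Finset.mem_univ a)
        have h2 : Sᶜ.orderEmbOfFin hcardSc b ∈ Sᶜ := Finset.orderEmbOfFin_mem _ _ _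
        rw [Finset.mem_compl] at h2
        exact h2 (hab ▸ h1)
      · exfalso
        have h1 : e b ∈ S := Finset.mem_image_of_mem e (Finset.mem_univ b)
        have h2 : Sᶜ.orderEmbOfFin hcardSc a ∈ Sᶜ := Finset.orderEmbOfFin_mem _ _ _
        rw [Finset.mem_compl] at h2
        exact h2 (hab ▸ h1)
      · exact congrArg Sum.inr ((Sᶜ.orderEmbOfFin hcardSc).injective hab)
    · simp only [Fintype.card_sum, Fintype.card_fin]
      omega
  let fe : Fin k ⊕ Fin m ≃ Fin n := Equiv.ofBijective f hf
  have h1 : MeasurePreserving (MeasurableEquiv.piCongrLeft (fun _ : Fin n => X) fe).symm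
      (Measure.pi fun _ : Fin n => μ) (Measure.pi fun _ : Fin k ⊕ Fin m => μ) :=
    (measurePreserving_piCongrLeft (fun _ => μ) fe).symm
  have h2 : MeasurePreserving (MeasurableEquiv.sumPiEquivProdPi (fun _ : Fin k ⊕ Fin m => X))
      (Measure.pi fun _ : Fin k ⊕ Fin m => μ)
      ((Measure.pi fun _ : Fin k => μ).prod (Measure.pi fun _ : Fin m => μ)) :=
    measurePreserving_sumPiEquivProdPi (fun _ => μ)
  have h3 : MeasurePreserving (Prod.fst : (Fin k → X) × (Fin m → X) → (Fin k → X))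
      ((Measure.pi fun _ : Fin k => μ).prod (Measure.pi fun _ : Fin m => μ))
      (Measure.pi fun _ : Fin k => μ) := by
    constructor
    · exact measurable_fst
    · simp
  exact (h3.comp h2).comp h1

/-- For a probability measure μ on X, a bounded measurable
g : X → ℝ, and 1 ≤ k ≤ n, the expectation over x ∈ Xⁿ (n-fold product of μ)
of (1/C(n,k)) ∑_{|I|=k} max_{i∈I} g(xᵢ) equals the expectation over
y ∈ X^k (k-fold product of μ) of max_{1≤i≤k} g(yᵢ), i.e. maxg@k. -/
theorem average_subset_max_unbiased_maxgk {X : Type*} [MeasurableSpace X]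
    (μ : Measure X) [IsProbabilityMeasure μ]
    (g : X → ℝ) (hg : Measurable g) (C : ℝ) (hbound : ∀ x, |g x| ≤ C)
    (n k : ℕ) (hk : 1 ≤ k) (hkn : k ≤ n) :
    ∫ x : Fin n → X,
        (1 / (n.choose k : ℝ)) *
          ∑ I ∈ Finset.powersetCard k (Finset.univ : Finset (Fin n)),
            finsetMax I (fun i => g (x i))
      ∂(Measure.pi fun _ : Fin n => μ)
      = ∫ y : Fin k → X, finsetMax (Finset.univ : Finset (Fin k)) (fun i => g (y i))
          ∂(Measure.pi fun _ : Fin k => μ) := by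
  classical
  have huniv : (Finset.univ : Finset (Fin k)).Nonempty :=
    ⟨⟨0, hk⟩, Finset.mem_univ _⟩
  -- measurability of the sup over a nonempty finset
  have hmeas : ∀ {l : ℕ} (J : Finset (Fin l)) (hJ : J.Nonempty),
      Measurable fun x : Fin l → X => finsetMax J (fun i => g (x i)) := by
    intro l J hJ
    have heq : (fun x : Fin l → X => finsetMax J (fun i => g (x i)))
        = J.sup' hJ (fun i (x : Fin l → X) => g (x i)) := by
      funext x
      rw [finsetMax_eq_sup' J hJ, Finset.sup'_apply]
    rw [heq]
    exact Finset.measurable_sup' hJ (fun i _ => hg.comp (measurable_pi_apply i))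
  have hint : ∀ {l : ℕ} (J : Finset (Fin l)) (hJ : J.Nonempty),
      Integrable (fun x : Fin l → X => finsetMax J (fun i => g (x i)))
        (Measure.pi fun _ : Fin l => μ) := by
    intro l J hJ
    refine Integrable.mono' (integrable_const C) (hmeas J hJ).aestronglyMeasurable
      (ae_of_all _ fun x => ?_)
    rw [finsetMax_eq_sup' J hJ, Real.norm_eq_abs, abs_le]
    constructor
    · obtain ⟨i, hi⟩ := hJ
      refine le_trans ?_ (Finset.le_sup' (fun i => g (x i)) hi)
      exact neg_le_of_abs_le (hbound (x i))
    · exact Finset.sup'_le hJ _ fun i _ => le_of_abs_le (hbound (x i))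
  set R := ∫ y : Fin k → X, finsetMax (Finset.univ : Finset (Fin k)) (fun i => g (y i))
      ∂(Measure.pi fun _ : Fin k => μ) with hR
  have key : ∀ I ∈ Finset.powersetCard k (Finset.univ : Finset (Fin n)),
      ∫ x : Fin n → X, finsetMax I (fun i => g (x i))
        ∂(Measure.pi fun _ : Fin n => μ) = R := by
    intro I hI
    have hIcard : I.card = k := (Finset.mem_powersetCard.mp hI).2
    have hIne : I.Nonempty := Finset.card_pos.mp (by omega)
    set e : Fin k → Fin n := fun j => I.orderEmbOfFin hIcard j with he
    have heinj : Function.Injective e := (I.orderEmbOfFin hIcard).injective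
    have himg : Finset.image e Finset.univ = I := by
      apply Finset.eq_of_subset_of_card_le
      · intro x hx
        obtain ⟨j, _, rfl⟩ := Finset.mem_image.mp hx
        exact Finset.orderEmbOfFin_mem I hIcard j
      · rw [Finset.card_image_of_injective _ heinj, Finset.card_univ, Fintype.card_fin, hIcard]
    have mp := measurePreserving_comp_inj μ hkn e heinj
    have hptwise : ∀ x : Fin n → X, finsetMax I (fun i => g (x i))
        = finsetMax Finset.univ (fun j : Fin k => g (x (e j))) := by
      intro x
      rw [finsetMax_eq_sup' I hIne, finsetMax_eq_sup' _ huniv]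
      apply le_antisymm
      · refine Finset.sup'_le hIne _ fun i hi => ?_
        obtain ⟨j, _, rfl⟩ := Finset.mem_image.mp (himg ▸ hi)
        exact Finset.le_sup' (fun j : Fin k => g (x (e j))) (Finset.mem_univ j)
      · refine Finset.sup'_le huniv _ fun j _ => ?_
        exact Finset.le_sup' (fun i => g (x i)) (himg ▸ Finset.mem_image_of_mem e (Finset.mem_univ j))
    calc ∫ x : Fin n → X, finsetMax I (fun i => g (x i)) ∂(Measure.pi fun _ : Fin n => μ)
        = ∫ x : Fin n → X, finsetMax Finset.univ
            (fun j : Fin k => g (((fun x : Fin n → X => fun i : Fin k => x (e i)) x) j))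
            ∂(Measure.pi fun _ : Fin n => μ) := by
          exact integral_congr_ae (ae_of_all _ fun x => hptwise x)
      _ = ∫ y : Fin k → X, finsetMax Finset.univ (fun i => g (y i))
            ∂(Measure.pi fun _ : Fin k => μ) := by
          rw [← mp.map_eq,
            integral_map mp.measurable.aemeasurable (hmeas _ huniv).aestronglyMeasurable]
  have hchoose : (0 : ℝ) < (n.choose k : ℝ) := by
    exact_mod_cast Nat.choose_pos hkn
  rw [integral_const_mul, integral_finset_sum _ (fun I hI => hint I
    (Finset.card_pos.mp (by rw [(Finset.mem_powersetCard.mp hI).2]; omega))),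
    Finset.sum_congr rfl key, Finset.sum_const, Finset.card_powersetCard,
    Finset.card_univ, Fintype.card_fin, nsmul_eq_mul]
  field_simp
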